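/- Let x'_1, …, x'_{n'} ∈ ℝ^p be nonzero vectors and y'_1, …, y'_{n'} ∈ ℝ, and define the 0/1 validation error E_v(β) = (1/n')·#{i : y'_i (x'_i{}^⊤β) < 0}. Let λ > 0 and μ > 0, suppose P_λ is μ-strongly convex (β ↦ P_λ(β) − (μ/2)‖β‖₂² is convex), and let β̂ be a minimizer of P_λ with P_λ(β̂) finite. Let β ∈ ℝ^p, θ ∈ ℝ^n with f*(−λθ) and Ω*(X^⊤θ) finite, and let ε_v ∈ [0, 1) with k := ⌊n'·ε_v⌋ < n'. Define ξ_i = ((x'_i{}^⊤β)/‖x'_i‖₂)² for i = 1, …, n', and let ξ_{(1)} ≤ ⋯ ≤ ξ_{(n')} be these values sorted in increasing order. If Gap_λ(β, θ) < (μ/2)·ξ_{(k+1)}, then |E_v(β̂) − E_v(β)| ≤ ε_v. -/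

import Mathlib

open scoped RealInnerProductSpace

noncomputable section

abbrev Vec (d : ℕ) := EuclideanSpace ℝ (Fin d)

/-- Matrix–vector product, landing in Euclidean space. -/
def mv {a b : ℕ} (M : Matrix (Fin a) (Fin b) ℝ) (v : Vec b) : Vec a := WithLp.toLp 2 (M.mulVec v)

/-- Fenchel conjugate of a real-valued function, with values in `EReal`. -/
noncomputable def rconj {d : ℕ} (f : Vec d → ℝ) (u : Vec d) : EReal :=
  ⨆ x, ((⟪u, x⟫ - f x : ℝ) : EReal)

/-- Fenchel conjugate of an `EReal`-valued function. -/
noncomputable def econj {d : ℕ} (g : Vec d → EReal) (u : Vec d) : EReal :=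
  ⨆ x, (((⟪u, x⟫ : ℝ) : EReal) - g x)

/-- Primal objective `P_λ(β) = f(Xβ) + λ Ω(β)`, with values in `EReal`. -/
noncomputable def Pfun {n p : ℕ} (X : Matrix (Fin n) (Fin p) ℝ)
    (f : Vec n → ℝ) (Ω : Vec p → EReal) (lam : ℝ) (b : Vec p) : EReal :=
  ((f (mv X b) : ℝ) : EReal) + ((lam : ℝ) : EReal) * Ω b

/-- Convexity of an `EReal`-valued function, via convex-combination inequalities. -/
def ECvx {d : ℕ} (g : Vec d → EReal) : Prop :=
  ∀ b1 b2 : Vec d, ∀ t : ℝ, 0 ≤ t → t ≤ 1 →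
    g (t • b1 + (1 - t) • b2) ≤
      ((t : ℝ) : EReal) * g b1 + (((1 - t) : ℝ) : EReal) * g b2

/- ### Auxiliary lemmas -/

lemma aux_adjoint {n p : ℕ} (X : Matrix (Fin n) (Fin p) ℝ) (θ : Vec n) (b : Vec p) :
    ⟪mv X.transpose θ, b⟫ = ⟪θ, mv X b⟫ := by
  simp only [mv, PiLp.inner_apply, RCLike.inner_apply, starRingEnd_apply, star_trivial,
    PiLp.toLp_apply, Matrix.mulVec, dotProduct, Matrix.transpose_apply, Finset.sum_mul, Finset.mul_sum]
  rw [Finset.sum_comm]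
  congr 1; ext i; congr 1; ext j; ring

lemma aux_norm_combo {p : ℕ} (a b : Vec p) (t : ℝ) :
    ‖t • a + (1 - t) • b‖ ^ 2 = t * ‖a‖^2 + (1-t) * ‖b‖^2 - t*(1-t)*‖a-b‖^2 := by
  have h1 : ∀ x : Vec p, ‖x‖^2 = ⟪x,x⟫ := fun x => (real_inner_self_eq_norm_sq x).symm
  simp only [h1]
  simp only [inner_add_add_self, inner_sub_sub_self, real_inner_smul_left, real_inner_smul_right]
  ring

lemma aux_esub_le {x : EReal} {c R : ℝ} (h : x - (c:EReal) ≤ (R:EReal)) :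
    x ≤ ((R + c : ℝ):EReal) := by
  induction x using EReal.rec with
  | bot => exact bot_le
  | coe q =>
      rw [← EReal.coe_sub] at h
      have : q - c ≤ R := by exact_mod_cast h
      exact_mod_cast (by linarith : q ≤ R + c)
  | top => simp at h

lemma aux_sign (a b y : ℝ) (hab : 0 < a * b) : y * a < 0 → y * b < 0 := by
  intro hya
  by_contra h'
  push_neg at h'
  have h1 : (y * a) * (y * b) ≤ 0 := mul_nonpos_of_nonpos_of_nonneg hya.le h'
  have hy : y ≠ 0 := fun h => by simp [h] at hya
  nlinarith [pow_pos (abs_pos.mpr hy) 2, sq_abs y]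

lemma aux_fin_card {m : ℕ} (j : Fin m) : (Finset.univ.filter (· < j)).card = j := by
  have : (Finset.univ.filter (· < j)) = Finset.Iio j := by ext i; simp
  rw [this, Fin.card_Iio]

/-- safe bound on the classification (0/1) validation error.
`E_v(β) = (1/n') #{i : y'_i (x'_iᵀβ) < 0}`; `P_λ` is `μ`-strongly convex with
minimizer `β̂` (finite optimal value); `θ` is dual feasible; `ε_v ∈ [0,1)` with
`k = ⌊n' ε_v⌋ < n'`; `ξ_i = ((x'_iᵀβ)/‖x'_i‖₂)²` and `σ` sorts the `ξ_i` in
increasing order.  If `Gap_λ(β,θ) < (μ/2) ξ_{(k+1)}` then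
`|E_v(β̂) - E_v(β)| ≤ ε_v`. -/
theorem stmt17 {n p n' : ℕ} (X : Matrix (Fin n) (Fin p) ℝ)
    (x' : Fin n' → Vec p) (hx' : ∀ i, x' i ≠ 0) (y' : Fin n' → ℝ)
    (f : Vec n → ℝ) (hconv : ConvexOn ℝ Set.univ f)
    (Ω : Vec p → EReal)
    (lam μ : ℝ) (hlam : 0 < lam) (hμ : 0 < μ)
    (hsc : ECvx fun b : Vec p =>
      Pfun X f Ω lam b - ((μ / 2 * ‖b‖ ^ 2 : ℝ) : EReal))
    (bhat : Vec p)
    (hmin : ∀ b, Pfun X f Ω lam bhat ≤ Pfun X f Ω lam b)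
    (hfin : ∃ r : ℝ, Pfun X f Ω lam bhat = (r : EReal))
    (Ev : Vec p → ℝ)
    (hEv : ∀ b, Ev b = (Nat.card {i : Fin n' // y' i * ⟪x' i, b⟫ < 0} : ℝ) / n')
    (β : Vec p) (θ : Vec n) (fs Ωs : ℝ)
    (hfs : rconj f ((-lam) • θ) = (fs : EReal))
    (hΩs : econj Ω (mv X.transpose θ) = (Ωs : EReal))
    (εv : ℝ) (hεv0 : 0 ≤ εv) (hεv1 : εv < 1)
    (k : ℕ) (hkdef : k = (⌊(n' : ℝ) * εv⌋).toNat) (hk : k < n')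
    (ξ : Fin n' → ℝ) (hξ : ∀ i, ξ i = (⟪x' i, β⟫ / ‖x' i‖) ^ 2)
    (σ : Equiv.Perm (Fin n')) (hσ : Monotone fun i => ξ (σ i))
    (hGap : ((f (mv X β) : ℝ) : EReal) + ((fs : ℝ) : EReal)
        + ((lam : ℝ) : EReal) * (Ω β + ((Ωs : ℝ) : EReal))
      < ((μ / 2 * ξ (σ ⟨k, hk⟩) : ℝ) : EReal)) :
    |Ev bhat - Ev β| ≤ εv := by
  classical
  obtain ⟨r, hr⟩ := hfin
  -- Ω is never ⊥
  have hΩbot : ∀ v : Vec p, Ω v ≠ ⊥ := by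
    intro v hv
    have h1 := le_iSup (fun x => (((⟪mv X.transpose θ, x⟫ : ℝ) : EReal) - Ω x)) v
    rw [show (⨆ x, (((⟪mv X.transpose θ, x⟫ : ℝ) : EReal) - Ω x)) = econj Ω (mv X.transpose θ)
      from rfl, hΩs, hv] at h1
    simp at h1
  -- Ω β is finite
  have hΩβtop : Ω β ≠ ⊤ := by
    intro htop
    rw [htop] at hGap
    rw [EReal.top_add_coe, EReal.coe_mul_top_of_pos hlam] at hGap
    rw [← EReal.coe_add] at hGap
    rw [EReal.coe_add_top] at hGap
    exact not_top_lt hGap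
  obtain ⟨w, hw⟩ : ∃ w : ℝ, Ω β = (w : EReal) :=
    ⟨(Ω β).toReal, ((Ω β).coe_toReal hΩβtop (hΩbot β)).symm⟩
  -- Pfun coercion helper
  have hPcoe : ∀ (v : Vec p) (c : ℝ), Ω v = (c : EReal) →
      Pfun X f Ω lam v = ((f (mv X v) + lam * c : ℝ) : EReal) := by
    intro v c hc
    rw [Pfun, hc, ← EReal.coe_mul, ← EReal.coe_add]
  -- Ω bhat is finite
  have hΩbtop : Ω bhat ≠ ⊤ := by
    intro htop
    rw [Pfun, htop, EReal.coe_mul_top_of_pos hlam, EReal.coe_add_top] at hr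
    exact (EReal.top_ne_coe r) hr
  obtain ⟨wh, hwh⟩ : ∃ c : ℝ, Ω bhat = (c : EReal) :=
    ⟨(Ω bhat).toReal, ((Ω bhat).coe_toReal hΩbtop (hΩbot bhat)).symm⟩
  have hPhat : f (mv X bhat) + lam * wh = r := by
    have := (hPcoe bhat wh hwh).symm.trans hr
    exact_mod_cast this
  -- Fenchel–Young at bhat
  have hFY1 : ⟪(-lam) • θ, mv X bhat⟫ - f (mv X bhat) ≤ fs := by
    have h := le_iSup (fun x => ((⟪(-lam) • θ, x⟫ - f x : ℝ) : EReal)) (mv X bhat)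
    rw [show (⨆ x, ((⟪(-lam) • θ, x⟫ - f x : ℝ) : EReal)) = rconj f ((-lam) • θ) from rfl,
      hfs] at h
    exact_mod_cast h
  have hFY2 : ⟪mv X.transpose θ, bhat⟫ - wh ≤ Ωs := by
    have h := le_iSup (fun x => (((⟪mv X.transpose θ, x⟫ : ℝ) : EReal) - Ω x)) bhat
    rw [show (⨆ x, (((⟪mv X.transpose θ, x⟫ : ℝ) : EReal) - Ω x)) = econj Ω (mv X.transpose θ)
      from rfl, hΩs, hwh, ← EReal.coe_sub] at h
    exact_mod_cast h
  rw [real_inner_smul_left] at hFY1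
  rw [aux_adjoint] at hFY2
  -- weak duality: the real gap dominates P(β) - P(bhat)
  have hGapR : f (mv X β) + fs + lam * (w + Ωs) < μ / 2 * ξ (σ ⟨k, hk⟩) := by
    rw [hw] at hGap
    exact_mod_cast hGap
  have hweak : (f (mv X β) + lam * w) - r ≤ f (mv X β) + fs + lam * (w + Ωs) := by
    nlinarith [hFY1, hFY2, hlam, hPhat]
  -- strong convexity
  have hsc' : ∀ t : ℝ, 0 < t → t ≤ 1 →
      μ / 2 * (1 - t) * ‖β - bhat‖^2 ≤ (f (mv X β) + lam * w) - r := by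
    intro t ht0 ht1
    have h := hsc β bhat t ht0.le ht1
    dsimp only at h
    rw [hPcoe β w hw, hPcoe bhat wh hwh] at h
    rw [← EReal.coe_sub, ← EReal.coe_sub, ← EReal.coe_mul, ← EReal.coe_mul,
      ← EReal.coe_add] at h
    have h2 := aux_esub_le h
    have h3 := (hmin (t • β + (1 - t) • bhat)).trans h2
    rw [hr] at h3
    have h4 : r ≤ t * ((f (mv X β) + lam * w) - μ / 2 * ‖β‖ ^ 2)
        + (1 - t) * ((f (mv X bhat) + lam * wh) - μ / 2 * ‖bhat‖ ^ 2)
        + μ / 2 * ‖t • β + (1 - t) • bhat‖ ^ 2 := by exact_mod_cast h3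
    rw [aux_norm_combo, hPhat] at h4
    have h5 : t * (μ / 2 * (1 - t) * ‖β - bhat‖^2) ≤
        t * ((f (mv X β) + lam * w) - r) := by nlinarith [h4]
    exact le_of_mul_le_mul_left h5 ht0
  have hc0 : (0:ℝ) ≤ μ / 2 * ‖β - bhat‖^2 := by positivity
  have hsc2 : μ / 2 * ‖β - bhat‖^2 ≤ (f (mv X β) + lam * w) - r := by
    apply le_of_forall_pos_le_add
    intro ε hε
    set c : ℝ := μ / 2 * ‖β - bhat‖^2 with hcdef
    set t : ℝ := min 1 (ε / (c + 1)) with htdef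
    have ht0 : 0 < t := lt_min one_pos (by positivity)
    have ht1 : t ≤ 1 := min_le_left _ _
    have h6 := hsc' t ht0 ht1
    have h7 : c * t ≤ ε := by
      have h8 : t ≤ ε / (c + 1) := min_le_right _ _
      have h9 : c * t ≤ (c + 1) * (ε / (c + 1)) := by nlinarith
      rw [mul_div_cancel₀ ε (by linarith : c + 1 ≠ 0)] at h9
      exact h9
    have h10 : μ / 2 * (1 - t) * ‖β - bhat‖^2 = c - c * t := by rw [hcdef]; ring
    rw [h10] at h6
    linarith
  -- the key quantitative bound
  have hkey : ‖β - bhat‖^2 < ξ (σ ⟨k, hk⟩) := by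
    have h := lt_of_le_of_lt (hsc2.trans hweak) hGapR
    have hμ2 : (0:ℝ) < μ / 2 := by linarith
    exact lt_of_mul_lt_mul_left h hμ2.le
  -- indices with large ξ have matching indicators
  have hmatch : ∀ i : Fin n', ξ (σ ⟨k, hk⟩) ≤ ξ i →
      (y' i * ⟪x' i, bhat⟫ < 0 ↔ y' i * ⟪x' i, β⟫ < 0) := by
    intro i hi
    have hxi : 0 < ‖x' i‖ := norm_pos_iff.mpr (hx' i)
    set a : ℝ := ⟪x' i, β⟫ with hadef
    set b : ℝ := ⟪x' i, bhat⟫ with hbdef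
    have hdiff : |b - a| ≤ ‖x' i‖ * ‖β - bhat‖ := by
      have h1 : b - a = ⟪x' i, bhat - β⟫ := by
        rw [hadef, hbdef, inner_sub_right]
      rw [h1]
      calc |⟪x' i, bhat - β⟫| ≤ ‖x' i‖ * ‖bhat - β‖ := abs_real_inner_le_norm _ _
        _ = ‖x' i‖ * ‖β - bhat‖ := by rw [norm_sub_rev]
    have hξi : ‖β - bhat‖^2 < (a / ‖x' i‖)^2 := by
      rw [← hξ i]; exact lt_of_lt_of_le hkey hi
    have hlt : ‖x' i‖ * ‖β - bhat‖ < |a| := by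
      have h1 : (‖x' i‖ * ‖β - bhat‖)^2 < a^2 := by
        have h0 := mul_lt_mul_of_pos_left hξi (by positivity : (0:ℝ) < ‖x' i‖^2)
        calc (‖x' i‖ * ‖β - bhat‖)^2 = ‖x' i‖^2 * ‖β - bhat‖^2 := by ring
          _ < ‖x' i‖^2 * (a / ‖x' i‖)^2 := h0
          _ = a^2 := by field_simp
      have h2 : 0 ≤ ‖x' i‖ * ‖β - bhat‖ := by positivity
      nlinarith [abs_nonneg a, sq_abs a]
    have habs : |b - a| < |a| := lt_of_le_of_lt hdiff hlt
    have hab : 0 < a * b := by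
      rcases abs_lt.mp habs with ⟨h1, h2⟩
      rcases lt_trichotomy a 0 with h | h | h
      · rw [abs_of_neg h] at h1 h2
        exact mul_pos_of_neg_of_neg h (by linarith)
      · exfalso; rw [h, abs_zero] at habs; exact absurd habs (by simp)
      · rw [abs_of_pos h] at h1 h2
        exact mul_pos h (by linarith)
    have hba : 0 < b * a := by rw [mul_comm]; exact hab
    exact ⟨aux_sign b a (y' i) hba, aux_sign a b (y' i) hab⟩
  -- counting
  set A : Finset (Fin n') := Finset.univ.filter (fun i => y' i * ⟪x' i, bhat⟫ < 0) with hA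
  set B : Finset (Fin n') := Finset.univ.filter (fun i => y' i * ⟪x' i, β⟫ < 0) with hB
  set S : Finset (Fin n') := Finset.univ.filter (fun i => ξ i < ξ (σ ⟨k, hk⟩)) with hS
  have hsub1 : A \ B ⊆ S := by
    intro i hi
    rw [Finset.mem_sdiff, hA, hB, Finset.mem_filter, Finset.mem_filter] at hi
    rw [hS, Finset.mem_filter]
    refine ⟨Finset.mem_univ i, ?_⟩
    by_contra h
    push_neg at h
    exact (hi.2 ⟨Finset.mem_univ i, (hmatch i h).mp hi.1.2⟩)
  have hsub2 : B \ A ⊆ S := by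
    intro i hi
    rw [Finset.mem_sdiff, hB, hA, Finset.mem_filter, Finset.mem_filter] at hi
    rw [hS, Finset.mem_filter]
    refine ⟨Finset.mem_univ i, ?_⟩
    by_contra h
    push_neg at h
    exact (hi.2 ⟨Finset.mem_univ i, (hmatch i h).mpr hi.1.2⟩)
  have hScard : S.card ≤ k := by
    have hmap : ∀ i ∈ S, σ.symm i ∈ Finset.univ.filter (· < (⟨k, hk⟩ : Fin n')) := by
      intro i hi
      rw [hS, Finset.mem_filter] at hi
      rw [Finset.mem_filter]
      refine ⟨Finset.mem_univ _, ?_⟩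
      by_contra h
      push_neg at h
      have h2 := hσ h
      simp only [Equiv.apply_symm_apply] at h2
      exact absurd hi.2 (not_lt.mpr h2)
    have hinj : Set.InjOn (fun i => σ.symm i) S := fun i _ j _ h => σ.symm.injective h
    calc S.card ≤ (Finset.univ.filter (· < (⟨k, hk⟩ : Fin n'))).card :=
          Finset.card_le_card_of_injOn _ hmap hinj
      _ = k := aux_fin_card _
  have hAB : (A \ B).card ≤ k := le_trans (Finset.card_le_card hsub1) hScard
  have hBA : (B \ A).card ≤ k := le_trans (Finset.card_le_card hsub2) hScard
  have hcard1 : A.card ≤ B.card + k := by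
    have h := Finset.card_le_card_sdiff_add_card (s := A) (t := B)
    omega
  have hcard2 : B.card ≤ A.card + k := by
    have h := Finset.card_le_card_sdiff_add_card (s := B) (t := A)
    omega
  have hEvA : Ev bhat = (A.card : ℝ) / n' := by
    rw [hEv, Nat.card_eq_fintype_card, Fintype.card_subtype]
  have hEvB : Ev β = (B.card : ℝ) / n' := by
    rw [hEv, Nat.card_eq_fintype_card, Fintype.card_subtype]
  have hn' : (0:ℝ) < n' := by
    have h : 0 < n' := lt_of_le_of_lt (Nat.zero_le k) hk
    exact_mod_cast h
  have hkle : (k : ℝ) ≤ (n' : ℝ) * εv := by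
    rw [hkdef]
    have h2 : ((⌊(n':ℝ) * εv⌋.toNat : ℤ) : ℝ) ≤ (n':ℝ) * εv := by
      rw [Int.toNat_of_nonneg (Int.floor_nonneg.2 (mul_nonneg (Nat.cast_nonneg n') hεv0))]
      exact Int.floor_le _
    exact_mod_cast h2
  rw [hEvA, hEvB, div_sub_div_same, abs_div, abs_of_pos hn', div_le_iff₀ hn']
  have habs : |(A.card : ℝ) - B.card| ≤ k := by
    rw [abs_le]
    constructor
    · have h : (B.card : ℝ) ≤ A.card + k := by exact_mod_cast hcard2
      linarith
    · have h : (A.card : ℝ) ≤ B.card + k := by exact_mod_cast hcard1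
      linarith
  calc |(A.card:ℝ) - B.card| ≤ k := habs
    _ ≤ (n':ℝ) * εv := hkle
    _ = εv * n' := mul_comm _ _

end
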